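/- Let V be a real vector space and consider a system of K+1 linear equations in variables x_0,...,x_n ∈ V of the form ∑_i a_{ik} x_i + ∑_j b_{jk} v_j = 0 (0 ≤ k ≤ K), where v_0,...,v_{2g} ∈ V are fixed vectors and the integer coefficients satisfy: (1) the system has exactly one solution (x_0,...,x_n) ∈ V^{n+1}; (2) for every subset A of {0,...,K} and all indices i, j, the partial sums ∑_{k∈A} a_{ik} and ∑_{k∈A} b_{jk} lie in {-1,0,1}. Then the unique solution satisfies x_i = ∑_j c_{ij} v_j with all c_{ij} ∈ {-1,0,1}. -/

import Mathlib

open Finset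

lemma sum_two_ind {I : Type} [Fintype I] [DecidableEq I] (i1 i2 : I) (h : i1 ≠ i2)
    (c1 c2 : ℝ) (f : I → ℝ) :
    ∑ j, (if j = i1 then c1 else if j = i2 then c2 else 0) * f j = c1 * f i1 + c2 * f i2 := by
  have hfun : ∀ j, (if j = i1 then c1 else if j = i2 then c2 else 0) * f j
      = (if j = i1 then c1 * f i1 else 0) + (if j = i2 then c2 * f i2 else 0) := by
    intro j
    by_cases h1 : j = i1
    · subst h1; rw [if_pos rfl, if_pos rfl, if_neg h]; ring
    · by_cases h2 : j = i2
      · subst h2; rw [if_neg h1, if_pos rfl, if_pos rfl, if_neg h1]; ring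
      · rw [if_neg h1, if_neg h1, if_neg h2, if_neg h2]; ring
  simp_rw [hfun, Finset.sum_add_distrib, Finset.sum_ite_eq' univ, if_pos (mem_univ _)]

lemma rows_nonzero {I κ : Type} [Fintype I] [DecidableEq I] [Fintype κ]
    (r : I → κ → ℤ)
    (hind : ∀ t : I → ℝ, (∀ k, (∑ i, t i * (r i k : ℝ)) = 0) → ∀ i, t i = 0) :
    ∀ i, ∃ k, r i k ≠ 0 := by
  intro i
  by_contra h
  push_neg at h
  have h1 := hind (fun j => if j = i then 1 else 0) ?_ i
  · simp at h1
  · intro k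
    simp only [ite_mul, one_mul, zero_mul]
    rw [Finset.sum_ite_eq' univ i (fun j => (r j k : ℝ))]
    simp [h k]

lemma row_has_pm {κ : Type} [Fintype κ] (r : κ → ℤ)
    (hval : ∀ k, r k = -1 ∨ r k = 0 ∨ r k = 1)
    (hsum : ∑ k, r k = 0) (hnz : ∃ k, r k ≠ 0) :
    (∃ p, r p = 1) ∧ (∃ q, r q = -1) := by
  obtain ⟨k0, hk0⟩ := hnz
  constructor
  · by_contra h
    push_neg at h
    have hle : ∀ k ∈ (univ : Finset κ), r k ≤ 0 := by
      intro k _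
      rcases hval k with h'|h'|h'
      · omega
      · omega
      · exact absurd h' (h k)
    exact hk0 ((Finset.sum_eq_zero_iff_of_nonpos hle).mp hsum k0 (mem_univ k0))
  · by_contra h
    push_neg at h
    have hle : ∀ k ∈ (univ : Finset κ), 0 ≤ r k := by
      intro k _
      rcases hval k with h'|h'|h'
      · exact absurd h' (h k)
      · omega
      · omega
    exact hk0 ((Finset.sum_eq_zero_iff_of_nonneg hle).mp hsum k0 (mem_univ k0))

lemma key : ∀ (N : ℕ) (I : Type) [Fintype I] [DecidableEq I], Fintype.card I ≤ N →
    ∀ (κ : Type) [Fintype κ] [DecidableEq κ] (r : I → κ → ℤ),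
    (∀ i k, r i k = -1 ∨ r i k = 0 ∨ r i k = 1) →
    (∀ i k k', k ≠ k' → r i k = r i k' → r i k = 0) →
    (∀ i, ∑ k, r i k = 0) →
    (∀ t : I → ℝ, (∀ k, (∑ i, t i * (r i k : ℝ)) = 0) → ∀ i, t i = 0) →
    ∀ i0 : I, ∃ A : Finset κ,
      (∑ k ∈ A, r i0 k = 1 ∨ ∑ k ∈ A, r i0 k = -1) ∧
      ∀ i, i ≠ i0 → ∑ k ∈ A, r i k = 0 := by
  intro N
  induction N with
  | zero =>
    intro I _ _ hcard κ _ _ r _ _ _ _ i0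
    have : 0 < Fintype.card I := Fintype.card_pos_iff.mpr ⟨i0⟩
    omega
  | succ N ih =>
    intro I _ _ hcard κ _ _ r hval hpair hsum hind i0
    by_cases hex : ∃ i1, i1 ≠ i0
    case neg =>
      push_neg at hex
      obtain ⟨k, hk⟩ := rows_nonzero r hind i0
      refine ⟨{k}, ?_, ?_⟩
      · rw [Finset.sum_singleton]
        rcases hval i0 k with h|h|h
        · right; exact h
        · exact absurd h hk
        · left; exact h
      · intro i hi; exact absurd (hex i) hi
    case pos =>
    obtain ⟨i1, hi1⟩ := hex
    obtain ⟨⟨p, hp⟩, ⟨q, hq⟩⟩ := row_has_pm (r i1) (hval i1) (hsum i1) (rows_nonzero r hind i1)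
    have hpq : p ≠ q := fun h => by rw [h, hq] at hp; omega
    have hrow : ∀ k, r i1 k = (if k = p then 1 else 0) + (if k = q then -1 else 0) := by
      intro k
      by_cases h1 : k = p
      · subst h1; rw [if_pos rfl, if_neg hpq, hp]; norm_num
      · by_cases h2 : k = q
        · subst h2; rw [if_neg h1, if_pos rfl, hq]; norm_num
        · rw [if_neg h1, if_neg h2]
          rcases hval i1 k with h|h|h
          · have := hpair i1 k q h2 (by rw [h, hq]); omega
          · omega
          · have := hpair i1 k p h1 (by rw [h, hp]); omega
    set I' := {i : I // i ≠ i1} with hI'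
    set r' : I' → κ → ℤ := fun i k => r i.1 k + r i.1 q * r i1 k with hr'
    -- each modified row is a permutation of the original row
    have hswap : ∀ i : I', ∃ σ : Equiv.Perm κ, ∀ k, r' i k = r i.1 (σ k) := by
      intro i
      by_cases hzq : r i.1 q = 0
      · refine ⟨Equiv.refl κ, fun k => ?_⟩
        simp [hr', hzq]
      · have hv : r i.1 q = -1 ∨ r i.1 q = 1 := by
          rcases hval i.1 q with h|h|h
          exacts [Or.inl h, absurd h hzq, Or.inr h]
        have hzp : r i.1 p = 0 := by
          by_contra hzp
          have hopp : r i.1 p = - r i.1 q := by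
            have e := hpair i.1 p q hpq
            rcases hval i.1 p with h1|h1|h1 <;> rcases hv with h2|h2 <;>
              first
                | omega
                | (have := e (by omega); omega)
          have hrowi : ∀ k, r i.1 k = r i.1 p * r i1 k := by
            intro k
            by_cases h1 : k = p
            · subst h1; rw [hp]; ring
            · by_cases h2 : k = q
              · subst h2; rw [hq, hopp]; ring
              · have hz : r i.1 k = 0 := by
                  have e1 := hpair i.1 k p h1
                  have e2 := hpair i.1 k q h2
                  rcases hval i.1 k with h|h|h
                  · rcases hv with h2'|h2'
                    · have := e2 (by omega); omega
                    · have := e1 (by omega); omega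
                  · exact h
                  · rcases hv with h2'|h2'
                    · have := e1 (by omega); omega
                    · have := e2 (by omega); omega
                rw [hz, hrow k, if_neg h1, if_neg h2]; ring
          have hcontr := hind (fun j => if j = i.1 then 1 else if j = i1 then -(r i.1 p : ℝ) else 0) ?_ i.1
          · rw [if_pos rfl] at hcontr; norm_num at hcontr
          · intro k
            rw [sum_two_ind i.1 i1 i.2 1 (-(r i.1 p : ℝ)) (fun j => (r j k : ℝ))]
            have hc : (r i.1 k : ℝ) = (r i.1 p : ℝ) * (r i1 k : ℝ) := by
              exact_mod_cast congrArg (fun z : ℤ => (z : ℝ)) (hrowi k)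
            rw [one_mul, hc]; ring
        refine ⟨Equiv.swap p q, fun k => ?_⟩
        by_cases h1 : k = p
        · subst h1
          rw [Equiv.swap_apply_left]
          simp [hr', hzp, hp]
        · by_cases h2 : k = q
          · subst h2
            rw [Equiv.swap_apply_right]
            simp [hr', hzp, hq]
          · rw [Equiv.swap_apply_of_ne_of_ne h1 h2]
            have hz1 : r i1 k = 0 := by rw [hrow k, if_neg h1, if_neg h2]; ring
            simp [hr', hz1]
    have hval' : ∀ (i : I') k, r' i k = -1 ∨ r' i k = 0 ∨ r' i k = 1 := by
      intro i k
      obtain ⟨σ, hσ⟩ := hswap i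
      rw [hσ]; exact hval _ _
    have hpair' : ∀ (i : I') k k', k ≠ k' → r' i k = r' i k' → r' i k = 0 := by
      intro i k k' hne heq
      obtain ⟨σ, hσ⟩ := hswap i
      rw [hσ k, hσ k'] at heq
      rw [hσ k]
      exact hpair i.1 (σ k) (σ k') (fun h => hne (σ.injective h)) heq
    have hsum' : ∀ i : I', ∑ k, r' i k = 0 := by
      intro i
      obtain ⟨σ, hσ⟩ := hswap i
      simp_rw [hσ]
      rw [Equiv.sum_comp σ (r i.1)]
      exact hsum i.1
    have hind' : ∀ t : I' → ℝ, (∀ k, (∑ i : I', t i * (r' i k : ℝ)) = 0) → ∀ i, t i = 0 := by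
      intro t ht i
      have hbar := hind (fun j => if h : j = i1 then (∑ i : I', t i * (r i.1 q : ℝ)) else t ⟨j, h⟩) ?_
      · have := hbar i.1
        rw [dif_neg i.2] at this
        simpa using this
      · intro k
        have hsplit : ∑ j : I, (if h : j = i1 then (∑ i : I', t i * (r i.1 q : ℝ)) else t ⟨j, h⟩) * (r j k : ℝ)
            = (∑ j ∈ univ.erase i1, (if h : j = i1 then (∑ i : I', t i * (r i.1 q : ℝ)) else t ⟨j, h⟩) * (r j k : ℝ))
              + (∑ i : I', t i * (r i.1 q : ℝ)) * (r i1 k : ℝ) := by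
          rw [← Finset.sum_erase_add _ _ (mem_univ i1), dif_pos rfl]
        rw [hsplit]
        have hsub : (∑ j ∈ univ.erase i1, (if h : j = i1 then (∑ i : I', t i * (r i.1 q : ℝ)) else t ⟨j, h⟩) * (r j k : ℝ))
            = ∑ i : I', t i * (r i.1 k : ℝ) := by
          rw [Finset.sum_subtype (p := fun j => j ≠ i1) (univ.erase i1) (by simp) (fun j => (if h : j = i1 then (∑ i : I', t i * (r i.1 q : ℝ)) else t ⟨j, h⟩) * (r j k : ℝ))]
          apply Finset.sum_congr rfl
          intro i _
          rw [dif_neg i.2]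
        rw [hsub]
        have ht' := ht k
        have : ∑ i : I', t i * (r' i k : ℝ) = ∑ i : I', t i * (r i.1 k : ℝ) + (∑ i : I', t i * (r i.1 q : ℝ)) * (r i1 k : ℝ) := by
          rw [Finset.sum_mul, ← Finset.sum_add_distrib]
          apply Finset.sum_congr rfl
          intro i _
          simp only [hr']
          push_cast
          ring
        rw [← this]
        exact ht'
    have hcard' : Fintype.card I' ≤ N := by
      have h1 : Fintype.card I' < Fintype.card I := Fintype.card_subtype_lt (x := i1) (by simp)
      omega
    obtain ⟨A', hA'1, hA'2⟩ := ih I' hcard' κ r' hval' hpair' hsum' hind' ⟨i0, Ne.symm hi1⟩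
    have hq' : ∀ i : I', r' i q = 0 := by
      intro i
      simp only [hr', hq]
      ring
    have hAB : ∀ i : I', ∑ k ∈ A', r' i k = ∑ k ∈ A'.erase q, r' i k :=
      fun i => (Finset.sum_erase _ (hq' i)).symm
    set B := A'.erase q with hB
    have hqB : q ∉ B := Finset.notMem_erase _ _
    have hpB : p ∈ B ↔ p ∈ A' := by simp [hB, hpq]
    have hsumB : ∀ s : Finset κ, ∑ k ∈ s, r i1 k = (if p ∈ s then 1 else 0) + (if q ∈ s then -1 else 0) := by
      intro s
      simp_rw [hrow]
      rw [Finset.sum_add_distrib, Finset.sum_ite_eq' s, Finset.sum_ite_eq' s]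
    set A := if p ∈ A' then insert q B else B with hA
    have hmain : ∀ i : I', ∑ k ∈ A, r i.1 k = ∑ k ∈ A', r' i k := by
      intro i
      have hB1 : ∑ k ∈ B, r' i k = ∑ k ∈ B, r i.1 k + r i.1 q * (if p ∈ B then 1 else 0) := by
        simp only [hr']
        rw [Finset.sum_add_distrib]
        congr 1
        rw [← Finset.mul_sum, hsumB B, if_neg hqB]
        ring
      rw [hAB i, hB1]
      by_cases hpA : p ∈ A'
      · rw [hA, if_pos hpA, Finset.sum_insert hqB, if_pos (hpB.mpr hpA)]
        ring
      · rw [hA, if_neg hpA, if_neg (fun h => hpA (hpB.mp h))]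
        ring
    have hA_i1 : ∑ k ∈ A, r i1 k = 0 := by
      rw [hsumB A]
      by_cases hpA : p ∈ A'
      · rw [hA, if_pos hpA]
        rw [if_pos (Finset.mem_insert_of_mem (hpB.mpr hpA)), if_pos (Finset.mem_insert_self q B)]
        ring
      · rw [hA, if_neg hpA]
        rw [if_neg (fun h => hpA (hpB.mp h)), if_neg hqB]
        ring
    refine ⟨A, ?_, ?_⟩
    · have := hmain ⟨i0, Ne.symm hi1⟩
      rw [this]
      exact hA'1
    · intro i hi
      by_cases h1 : i = i1
      · subst h1; exact hA_i1
      · rw [hmain ⟨i, h1⟩]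
        exact hA'2 ⟨i, h1⟩ (fun hh => hi (congrArg Subtype.val hh))



/-- Lemma on systems of linear equations in a real vector space coming from
inverse and cycle relations of a fundamental polygon (Lemma `lem:linear`). -/
theorem stmt0 (V : Type*) [AddCommGroup V] [Module ℝ V]
    (n g K : ℕ)
    (a : Fin (n + 1) → Fin (K + 1) → ℤ)
    (b : Fin (2 * g + 1) → Fin (K + 1) → ℤ)
    (v : Fin (2 * g + 1) → V)
    -- (1) the system has exactly one solution
    (huniq : ∃! x : Fin (n + 1) → V,
      ∀ k : Fin (K + 1),
        (∑ i, (a i k : ℝ) • x i) + (∑ j, (b j k : ℝ) • v j) = 0)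
    -- (2) all partial sums of coefficients lie in {-1,0,1}
    (hpartial : ∀ A : Finset (Fin (K + 1)),
      (∀ i, (∑ k ∈ A, a i k) ∈ ({-1, 0, 1} : Set ℤ)) ∧
      (∀ j, (∑ k ∈ A, b j k) ∈ ({-1, 0, 1} : Set ℤ)))
    (x : Fin (n + 1) → V)
    (hx : ∀ k : Fin (K + 1),
      (∑ i, (a i k : ℝ) • x i) + (∑ j, (b j k : ℝ) • v j) = 0) :
    ∃ c : Fin (n + 1) → Fin (2 * g + 1) → ℤ,
      (∀ i j, c i j ∈ ({-1, 0, 1} : Set ℤ)) ∧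
      ∀ i, x i = ∑ j, (c i j : ℝ) • v j := by
  classical
  have hmem : ∀ s : ℤ, s ∈ ({-1, 0, 1} : Set ℤ) ↔ (s = -1 ∨ s = 0 ∨ s = 1) := by
    intro s; simp [Set.mem_insert_iff]
  by_cases hV : ∀ w : V, w = 0
  · refine ⟨fun _ _ => 0, by simp [hmem], fun i => ?_⟩
    rw [hV (x i)]
    simp
  · push_neg at hV
    obtain ⟨w, hw⟩ := hV
    have haind : ∀ t : Fin (n+1) → ℝ, (∀ k, (∑ i, t i * (a i k : ℝ)) = 0) → ∀ i, t i = 0 := by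
      intro t ht i
      obtain ⟨x₀, _, huq⟩ := huniq
      have hsol : ∀ k : Fin (K+1),
          (∑ i', (a i' k : ℝ) • (x i' + t i' • w)) + (∑ j, (b j k : ℝ) • v j) = 0 := by
        intro k
        have he : ∑ i', (a i' k : ℝ) • (x i' + t i' • w)
            = (∑ i', (a i' k : ℝ) • x i') + (∑ i', t i' * (a i' k : ℝ)) • w := by
          rw [Finset.sum_smul, ← Finset.sum_add_distrib]
          apply Finset.sum_congr rfl
          intro i' _
          rw [smul_add, smul_smul, mul_comm]
        rw [he, ht k, zero_smul, add_zero]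
        exact hx k
      have h1 := huq _ hsol
      have h2 := huq _ hx
      have h3 : x i + t i • w = x i := by
        calc x i + t i • w = x₀ i := congrFun h1 i
        _ = x i := (congrFun h2 i).symm
      rcases smul_eq_zero.mp (add_eq_left.mp h3) with h|h
      · exact h
      · exact absurd h hw
    -- extended rows with an extra column making row sums vanish
    set rb : Fin (n+1) → Option (Fin (K+1)) → ℤ :=
      fun i o => o.elim (-∑ k, a i k) (a i) with hrb
    have hrbs : ∀ i k, rb i (some k) = a i k := fun i k => rfl
    have hrbn : ∀ i, rb i none = -∑ k, a i k := fun i => rfl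
    have hval : ∀ i o, rb i o = -1 ∨ rb i o = 0 ∨ rb i o = 1 := by
      intro i o
      cases o with
      | none =>
        have := (hmem _).mp ((hpartial univ).1 i)
        rw [hrbn]; omega
      | some k =>
        have := (hmem _).mp ((hpartial {k}).1 i)
        rw [Finset.sum_singleton] at this
        rw [hrbs]; omega
    have hpair : ∀ i o o', o ≠ o' → rb i o = rb i o' → rb i o = 0 := by
      intro i o o' hne heq
      cases o with
      | none =>
        cases o' with
        | none => exact absurd rfl hne
        | some k =>
          have h1 := (hmem _).mp ((hpartial univ).1 i)
          have h2 := (hmem _).mp ((hpartial (univ.erase k)).1 i)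
          rw [Finset.sum_erase_eq_sub (mem_univ k)] at h2
          rw [hrbn] at heq ⊢
          rw [hrbs] at heq
          omega
      | some k =>
        cases o' with
        | none =>
          have h1 := (hmem _).mp ((hpartial univ).1 i)
          have h2 := (hmem _).mp ((hpartial (univ.erase k)).1 i)
          rw [Finset.sum_erase_eq_sub (mem_univ k)] at h2
          rw [hrbs] at heq ⊢
          rw [hrbn] at heq
          omega
        | some k' =>
          have hkk' : k ≠ k' := fun h => hne (by rw [h])
          have h1 := (hmem _).mp ((hpartial {k}).1 i)
          have h2 := (hmem _).mp ((hpartial {k'}).1 i)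
          have h3 := (hmem _).mp ((hpartial {k, k'}).1 i)
          rw [Finset.sum_singleton] at h1 h2
          rw [Finset.sum_pair hkk'] at h3
          rw [hrbs] at heq ⊢
          rw [hrbs] at heq
          omega
    have hsumz : ∀ i, ∑ o : Option (Fin (K+1)), rb i o = 0 := by
      intro i
      rw [Fintype.sum_option]
      rw [hrbn]
      have : ∑ k, rb i (some k) = ∑ k, a i k := Finset.sum_congr rfl (fun k _ => hrbs i k)
      rw [this]
      ring
    have hindb : ∀ t : Fin (n+1) → ℝ,
        (∀ o, (∑ i, t i * (rb i o : ℝ)) = 0) → ∀ i, t i = 0 := by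
      intro t ht
      apply haind t
      intro k
      have := ht (some k)
      simpa [hrbs] using this
    have main : ∀ i0, ∃ ci : Fin (2*g+1) → ℤ,
        (∀ j, ci j ∈ ({-1,0,1} : Set ℤ)) ∧ x i0 = ∑ j, (ci j : ℝ) • v j := by
      intro i0
      obtain ⟨A, hA1, hA2⟩ := key (n+1) (Fin (n+1)) (by simp) (Option (Fin (K+1)))
        rb hval hpair hsumz hindb i0
      have hcompl : ∀ i, ∑ o ∈ Aᶜ, rb i o = - ∑ o ∈ A, rb i o := by
        intro i
        have h := Finset.sum_add_sum_compl A (rb i)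
        rw [hsumz i] at h
        omega
      set A1 := if none ∈ A then Aᶜ else A with hA1def
      have hnone : none ∉ A1 := by
        by_cases h : none ∈ A <;> simp [hA1def, h]
      have hA1z : ∀ i, i ≠ i0 → ∑ o ∈ A1, rb i o = 0 := by
        intro i hi
        by_cases h : none ∈ A
        · rw [hA1def, if_pos h, hcompl i, hA2 i hi]; ring
        · rw [hA1def, if_neg h]; exact hA2 i hi
      have hA1e : ∑ o ∈ A1, rb i0 o = 1 ∨ ∑ o ∈ A1, rb i0 o = -1 := by
        by_cases h : none ∈ A
        · rw [hA1def, if_pos h, hcompl i0]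
          rcases hA1 with h'|h'
          · right; rw [h']
          · left; rw [h']; ring
        · rw [hA1def, if_neg h]; exact hA1
      have hinj : Set.InjOn some (some ⁻¹' (A1 : Set (Option (Fin (K+1))))) :=
        fun _ _ _ _ h => Option.some_injective _ h
      set A0 := A1.preimage some hinj with hA0def
      have hpre : ∀ i, ∑ k ∈ A0, a i k = ∑ o ∈ A1, rb i o := by
        intro i
        have : ∑ k ∈ A0, rb i (some k) = ∑ o ∈ A1, rb i o := by
          apply Finset.sum_preimage
          intro o ho hno
          exfalso
          apply hno
          cases o with
          | none => exact absurd ho hnone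
          | some k => exact ⟨k, rfl⟩
        rw [← this]
        exact Finset.sum_congr rfl (fun k _ => (hrbs i k).symm)
      have hcoef : ∀ i, i ≠ i0 → ∑ k ∈ A0, a i k = 0 := by
        intro i hi; rw [hpre i]; exact hA1z i hi
      have hεd : ∑ k ∈ A0, a i0 k = 1 ∨ ∑ k ∈ A0, a i0 k = -1 := by
        rw [hpre i0]; exact hA1e
      have hxsum : ∀ i, ∑ k ∈ A0, (a i k : ℝ) • x i = ((∑ k ∈ A0, a i k : ℤ) : ℝ) • x i := by
        intro i
        rw [← Finset.sum_smul]
        norm_cast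
      have e1 : ∑ k ∈ A0, ∑ i, (a i k : ℝ) • x i = ((∑ k ∈ A0, a i0 k : ℤ) : ℝ) • x i0 := by
        rw [Finset.sum_comm]
        rw [Finset.sum_eq_single i0]
        · exact hxsum i0
        · intro i _ hi
          rw [hxsum i, hcoef i hi]
          norm_num
        · intro h; exact absurd (mem_univ i0) h
      have e2 : ∑ k ∈ A0, ∑ j, (b j k : ℝ) • v j
          = ∑ j, ((∑ k ∈ A0, b j k : ℤ) : ℝ) • v j := by
        rw [Finset.sum_comm]
        apply Finset.sum_congr rfl
        intro j _
        rw [← Finset.sum_smul]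
        norm_cast
      have hre : ((∑ k ∈ A0, a i0 k : ℤ) : ℝ) • x i0
          + ∑ j, ((∑ k ∈ A0, b j k : ℤ) : ℝ) • v j = 0 := by
        rw [← e1, ← e2, ← Finset.sum_add_distrib]
        exact Finset.sum_eq_zero (fun k _ => hx k)
      have hS : ∀ j, (∑ k ∈ A0, b j k) = -1 ∨ (∑ k ∈ A0, b j k) = 0 ∨ (∑ k ∈ A0, b j k) = 1 :=
        fun j => (hmem _).mp ((hpartial A0).2 j)
      rcases hεd with hε|hε
      · refine ⟨fun j => -(∑ k ∈ A0, b j k), ?_, ?_⟩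
        · intro j; have := hS j; simp only [hmem]; omega
        · rw [hε] at hre
          push_cast at hre
          rw [one_smul] at hre
          have hneg := eq_neg_of_add_eq_zero_left hre
          rw [hneg, ← Finset.sum_neg_distrib]
          apply Finset.sum_congr rfl
          intro j _
          push_cast
          rw [neg_smul]
      · refine ⟨fun j => (∑ k ∈ A0, b j k), ?_, ?_⟩
        · intro j; have := hS j; simp only [hmem]; omega
        · rw [hε] at hre
          push_cast at hre
          rw [neg_smul, one_smul, neg_add_eq_zero] at hre
          simpa using hre
    choose c hc1 hc2 using main
    exact ⟨c, hc1, hc2⟩
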